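/- (Dragomir) Let f : (0,∞) → ℝ be differentiable and convex with f(1) = 0. Then for any P, Q ∈ Γ_n, C_f(P||Q) = ∑ q_i f(p_i/q_i) satisfies 0 ≤ C_f(P||Q) ≤ ∑_{i=1}^n (p_i − q_i)·f'(p_i/q_i). -/
import Mathlib

lemma tangent_aux (f : ℝ → ℝ) (hconv : ConvexOn ℝ (Set.Ioi (0 : ℝ)) f)
    (hdiff : ∀ x : ℝ, 0 < x → DifferentiableAt ℝ f x) (hf1 : f 1 = 0)
    {x : ℝ} (hx : 0 < x) : f x ≤ (x - 1) * deriv f x := by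
  rcases lt_trichotomy x 1 with h | h | h
  · have := hconv.deriv_le_slope (Set.mem_Ioi.2 hx) (Set.mem_Ioi.2 one_pos) h (hdiff x hx)
    rw [slope_def_field, hf1] at this
    have h1 : 0 < 1 - x := by linarith
    rw [le_div_iff₀ h1] at this
    nlinarith [this]
  · simp [h, hf1]
  · have := hconv.slope_le_deriv (Set.mem_Ioi.2 one_pos) (Set.mem_Ioi.2 hx) h (hdiff x hx)
    rw [slope_def_field, hf1] at this
    have h1 : 0 < x - 1 := by linarith
    rw [div_le_iff₀ h1] at this
    linarith [this]

theorem dragomir_bounds (f : ℝ → ℝ)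
    (hconv : ConvexOn ℝ (Set.Ioi (0 : ℝ)) f)
    (hdiff : ∀ x : ℝ, 0 < x → DifferentiableAt ℝ f x) (hf1 : f 1 = 0)
    (n : ℕ) (hn : 2 ≤ n) (p q : Fin n → ℝ)
    (hp : ∀ i, 0 < p i) (hq : ∀ i, 0 < q i)
    (hps : ∑ i, p i = 1) (hqs : ∑ i, q i = 1) :
    0 ≤ ∑ i, q i * f (p i / q i) ∧
    (∑ i, q i * f (p i / q i)) ≤ ∑ i, (p i - q i) * deriv f (p i / q i) := by
  constructor
  · have hjensen := hconv.map_sum_le (t := Finset.univ) (w := q) (p := fun i => p i / q i)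
      (fun i _ => (hq i).le) hqs (fun i _ => Set.mem_Ioi.2 (div_pos (hp i) (hq i)))
    have hsum : ∑ i, q i • (p i / q i) = 1 := by
      rw [← hps]
      exact Finset.sum_congr rfl fun i _ => by
        rw [smul_eq_mul, mul_div_cancel₀ _ (hq i).ne']
    rw [hsum, hf1] at hjensen
    simpa using hjensen
  · apply Finset.sum_le_sum
    intro i _
    have hx : 0 < p i / q i := div_pos (hp i) (hq i)
    have := tangent_aux f hconv hdiff hf1 hx
    calc q i * f (p i / q i) ≤ q i * ((p i / q i - 1) * deriv f (p i / q i)) :=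
          mul_le_mul_of_nonneg_left this (hq i).le
      _ = (p i - q i) * deriv f (p i / q i) := by
          rw [← mul_assoc]
          congr 1
          have hqne : q i ≠ 0 := (hq i).ne'
          field_simp
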